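/- Let (C,⊗,I,σ) be a symmetric monoidal category, (D,⊗',I',σ',Tr) a partially traced category, and F : C → D a faithful strong symmetric monoidal functor with coherence isomorphisms m_{A,B} : FA⊗'FB → F(A⊗B). Define a family of partial functions T̂ on C by: for f : A⊗U → B⊗U, T̂^U_{A,B}(f) = g if there exists a (necessarily unique, by faithfulness) g : A → B such that Tr^{FU}_{FA,FB}(m⁻¹_{B,U}∘F(f)∘m_{A,U}) is defined and equals F(g), and T̂^U_{A,B}(f) is undefined otherwise. Then T̂ is a partial trace on C, so C is partially traced. -/

import Mathlib

open CategoryTheory MonoidalCategory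

universe v u v' u'

/-- A partial trace on a symmetric monoidal category, in the sense of Haghverdi and Scott.
Partiality is modelled via `Option`: `tr f = some v` means the trace of `f` is defined
and equals `v`, while `tr f = none` means it is undefined. -/
structure PartialTrace (C : Type u) [Category.{v} C] [MonoidalCategory C]
    [SymmetricCategory C] where
  tr : ∀ {A B U : C}, (A ⊗ U ⟶ B ⊗ U) → Option (A ⟶ B)
  naturality : ∀ {A A' B B' U : C} (f : A ⊗ U ⟶ B ⊗ U) (g : A' ⟶ A) (h : B ⟶ B')
    (v : A ⟶ B), tr f = some v → tr ((g ⊗ₘ 𝟙 U) ≫ f ≫ (h ⊗ₘ 𝟙 U)) = some (g ≫ v ≫ h)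
  dinaturality : ∀ {A B U U' : C} (f : A ⊗ U ⟶ B ⊗ U') (g : U' ⟶ U),
    tr (f ≫ (𝟙 B ⊗ₘ g)) = tr ((𝟙 A ⊗ₘ g) ≫ f)
  strength : ∀ {A B X Y U : C} (f : A ⊗ U ⟶ B ⊗ U) (g : X ⟶ Y) (v : A ⟶ B),
    tr f = some v →
      tr ((α_ X A U).hom ≫ (g ⊗ₘ f) ≫ (α_ Y B U).inv) = some (g ⊗ₘ v)
  vanishing_one : ∀ {A B : C} (f : A ⊗ 𝟙_ C ⟶ B ⊗ 𝟙_ C),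
    tr f = some ((ρ_ A).inv ≫ f ≫ (ρ_ B).hom)
  vanishing_two : ∀ {A B U V : C} (f : A ⊗ (U ⊗ V) ⟶ B ⊗ (U ⊗ V))
    (w : A ⊗ U ⟶ B ⊗ U),
    tr ((α_ A U V).hom ≫ f ≫ (α_ B U V).inv) = some w → tr w = tr f
  yanking : ∀ A : C, tr (β_ A A).hom = some (𝟙 A)

section Aux

open Functor.LaxMonoidal Functor.OplaxMonoidal

variable {C : Type u} [Category.{v} C] [MonoidalCategory C] [SymmetricCategory C]
variable {D : Type u'} [Category.{v'} D] [MonoidalCategory D] [SymmetricCategory D]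
variable (F : C ⥤ D) [F.Braided]

/-- Lift of an option-valued morphism along a faithful functor. -/
noncomputable def PT.lift (hF : F.Faithful) {A B : C}
    (o : Option (F.obj A ⟶ F.obj B)) : Option (A ⟶ B) :=
  letI := Classical.propDecidable (∃ g : A ⟶ B, o = some (F.map g))
  if h : ∃ g : A ⟶ B, o = some (F.map g) then some h.choose else none

lemma PT.lift_eq_some (hF : F.Faithful) {A B : C}
    (o : Option (F.obj A ⟶ F.obj B)) (g : A ⟶ B) :
    PT.lift F hF o = some g ↔ o = some (F.map g) := by
  haveI := hF
  constructor
  · intro h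
    rw [PT.lift] at h
    split at h
    · next he =>
      obtain rfl : he.choose = g := Option.some_inj.mp h
      exact he.choose_spec
    · exact absurd h (by simp)
  · intro h
    have he : ∃ g' : A ⟶ B, o = some (F.map g') := ⟨g, h⟩
    rw [PT.lift, dif_pos he]
    congr 1
    apply F.map_injective
    exact Option.some_inj.mp (he.choose_spec.symm.trans h)

lemma PT.nat_eq {A A' B B' U : C} (f : A ⊗ U ⟶ B ⊗ U) (g : A' ⟶ A) (h : B ⟶ B') :
    μ F A' U ≫ F.map ((g ⊗ₘ 𝟙 U) ≫ f ≫ (h ⊗ₘ 𝟙 U)) ≫ δ F B' U =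
      (F.map g ⊗ₘ 𝟙 (F.obj U)) ≫ (μ F A U ≫ F.map f ≫ δ F B U) ≫
        (F.map h ⊗ₘ 𝟙 (F.obj U)) := by
  simp only [Functor.map_comp, Category.assoc, tensorHom_id,
    Functor.Monoidal.map_whiskerRight, Functor.Monoidal.μ_δ, Functor.Monoidal.δ_μ,
    Functor.Monoidal.μ_δ_assoc, Functor.Monoidal.δ_μ_assoc]
  all_goals simp [whisker_exchange_assoc, whisker_exchange]

lemma PT.dinat_eq₁ {A B U U' : C} (f : A ⊗ U ⟶ B ⊗ U') (g : U' ⟶ U) :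
    μ F A U ≫ F.map (f ≫ (𝟙 B ⊗ₘ g)) ≫ δ F B U =
      (μ F A U ≫ F.map f ≫ δ F B U') ≫ (𝟙 (F.obj B) ⊗ₘ F.map g) := by
  simp only [Functor.map_comp, Category.assoc, id_tensorHom,
    Functor.Monoidal.map_whiskerLeft, Functor.Monoidal.μ_δ, Functor.Monoidal.δ_μ,
    Functor.Monoidal.μ_δ_assoc, Functor.Monoidal.δ_μ_assoc]
  all_goals simp [whisker_exchange_assoc, whisker_exchange]

lemma PT.dinat_eq₂ {A B U U' : C} (f : A ⊗ U ⟶ B ⊗ U') (g : U' ⟶ U) :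
    μ F A U' ≫ F.map ((𝟙 A ⊗ₘ g) ≫ f) ≫ δ F B U' =
      (𝟙 (F.obj A) ⊗ₘ F.map g) ≫ (μ F A U ≫ F.map f ≫ δ F B U') := by
  simp only [Functor.map_comp, Category.assoc, id_tensorHom,
    Functor.Monoidal.map_whiskerLeft, Functor.Monoidal.μ_δ, Functor.Monoidal.δ_μ,
    Functor.Monoidal.μ_δ_assoc, Functor.Monoidal.δ_μ_assoc]
  all_goals simp [whisker_exchange_assoc, whisker_exchange]

lemma PT.strength_eq {A B X Y U : C} (f : A ⊗ U ⟶ B ⊗ U) (g : X ⟶ Y) :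
    μ F (X ⊗ A) U ≫ F.map ((α_ X A U).hom ≫ (g ⊗ₘ f) ≫ (α_ Y B U).inv) ≫ δ F (Y ⊗ B) U =
      (δ F X A ⊗ₘ 𝟙 (F.obj U)) ≫
        ((α_ (F.obj X) (F.obj A) (F.obj U)).hom ≫
          (F.map g ⊗ₘ (μ F A U ≫ F.map f ≫ δ F B U)) ≫
          (α_ (F.obj Y) (F.obj B) (F.obj U)).inv) ≫ (μ F Y B ⊗ₘ 𝟙 (F.obj U)) := by
  simp only [Functor.map_comp, Category.assoc, Functor.Monoidal.map_tensor,
    Functor.Monoidal.map_associator, Functor.Monoidal.map_associator_inv,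
    Functor.Monoidal.map_whiskerLeft, Functor.Monoidal.map_whiskerRight,
    Functor.Monoidal.μ_δ, Functor.Monoidal.δ_μ, Functor.Monoidal.μ_δ_assoc,
    Functor.Monoidal.δ_μ_assoc, tensorHom_id, id_tensorHom, MonoidalCategory.tensorHom_def]
  all_goals simp [whisker_exchange_assoc, whisker_exchange]

lemma PT.van1_eq₁ {A B : C} (f : A ⊗ 𝟙_ C ⟶ B ⊗ 𝟙_ C) :
    ((μ F A (𝟙_ C) ≫ F.map f ≫ δ F B (𝟙_ C)) ≫ (𝟙 (F.obj B) ⊗ₘ η F)) ≫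
        (𝟙 (F.obj B) ⊗ₘ ε F) =
      μ F A (𝟙_ C) ≫ F.map f ≫ δ F B (𝟙_ C) := by
  simp [id_tensorHom, ← MonoidalCategory.whiskerLeft_comp]

lemma PT.van1_eq₂ {A B : C} (f : A ⊗ 𝟙_ C ⟶ B ⊗ 𝟙_ C) :
    (ρ_ (F.obj A)).inv ≫
        ((𝟙 (F.obj A) ⊗ₘ ε F) ≫ (μ F A (𝟙_ C) ≫ F.map f ≫ δ F B (𝟙_ C)) ≫
          (𝟙 (F.obj B) ⊗ₘ η F)) ≫ (ρ_ (F.obj B)).hom =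
      F.map ((ρ_ A).inv ≫ f ≫ (ρ_ B).hom) := by
  simp only [Functor.map_comp, Category.assoc, id_tensorHom,
    Functor.Monoidal.map_rightUnitor, Functor.Monoidal.map_rightUnitor_inv,
    Functor.Monoidal.μ_δ, Functor.Monoidal.δ_μ, Functor.Monoidal.μ_δ_assoc,
    Functor.Monoidal.δ_μ_assoc]
  all_goals simp [whisker_exchange_assoc, whisker_exchange]

lemma PT.van2_eq₁ {A B U V : C} (f : A ⊗ (U ⊗ V) ⟶ B ⊗ (U ⊗ V)) :
    (α_ (F.obj A) (F.obj U) (F.obj V)).hom ≫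
        ((𝟙 (F.obj A) ⊗ₘ μ F U V) ≫
          (μ F A (U ⊗ V) ≫ F.map f ≫ δ F B (U ⊗ V)) ≫ (𝟙 (F.obj B) ⊗ₘ δ F U V)) ≫
        (α_ (F.obj B) (F.obj U) (F.obj V)).inv =
      (μ F A U ⊗ₘ 𝟙 (F.obj V)) ≫
        (μ F (A ⊗ U) V ≫ F.map ((α_ A U V).hom ≫ f ≫ (α_ B U V).inv) ≫ δ F (B ⊗ U) V) ≫
        (δ F B U ⊗ₘ 𝟙 (F.obj V)) := by
  simp only [Functor.map_comp, Category.assoc, Functor.Monoidal.map_associator,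
    Functor.Monoidal.map_associator_inv, Functor.Monoidal.μ_δ, Functor.Monoidal.δ_μ,
    Functor.Monoidal.μ_δ_assoc, Functor.Monoidal.δ_μ_assoc, tensorHom_id, id_tensorHom]
  all_goals simp [whisker_exchange_assoc, whisker_exchange]

lemma PT.van2_eq₂ {A B U V : C} (f : A ⊗ (U ⊗ V) ⟶ B ⊗ (U ⊗ V)) :
    ((μ F A (U ⊗ V) ≫ F.map f ≫ δ F B (U ⊗ V)) ≫ (𝟙 (F.obj B) ⊗ₘ δ F U V)) ≫
        (𝟙 (F.obj B) ⊗ₘ μ F U V) =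
      μ F A (U ⊗ V) ≫ F.map f ≫ δ F B (U ⊗ V) := by
  simp [id_tensorHom, ← MonoidalCategory.whiskerLeft_comp]

lemma PT.yank_eq (A : C) :
    μ F A A ≫ F.map (β_ A A).hom ≫ δ F A A = (β_ (F.obj A) (F.obj A)).hom := by
  simp

end Aux

/-- A symmetric monoidal subcategory of a partially traced category is partially traced:
if `F : C → D` is a faithful strong symmetric monoidal functor into a partially traced
category `(D, T')`, then the family `T̂` defined by
`T̂ f = g  iff  T' (m⁻¹ ∘ F f ∘ m) = F g` (undefined otherwise) is a partial trace on `C`. -/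
theorem partial_trace_of_faithful_functor
    (C : Type u) [Category.{v} C] [MonoidalCategory C] [SymmetricCategory C]
    (D : Type u') [Category.{v'} D] [MonoidalCategory D] [SymmetricCategory D]
    (T' : PartialTrace D) (F : C ⥤ D) [F.Braided] (hF : F.Faithful) :
    ∃ T : PartialTrace C, ∀ {A B U : C} (f : A ⊗ U ⟶ B ⊗ U) (g : A ⟶ B),
      T.tr f = some g ↔
        T'.tr (Functor.LaxMonoidal.μ F A U ≫ F.map f ≫ Functor.OplaxMonoidal.δ F B U) =
          some (F.map g) := by
  open Functor.LaxMonoidal Functor.OplaxMonoidal in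
  refine ⟨{
    tr := fun {A B U} f => PT.lift F hF (T'.tr (μ F A U ≫ F.map f ≫ δ F B U))
    naturality := ?_
    dinaturality := ?_
    strength := ?_
    vanishing_one := ?_
    vanishing_two := ?_
    yanking := ?_ }, fun {A B U} f g => PT.lift_eq_some F hF _ g⟩
  · intro A A' B B' U f g h v hv
    rw [PT.lift_eq_some] at hv ⊢
    rw [PT.nat_eq]
    simpa using T'.naturality _ (F.map g) (F.map h) _ hv
  · intro A B U U' f g
    show PT.lift F hF (T'.tr (Functor.LaxMonoidal.μ F A U ≫ F.map (f ≫ (𝟙 B ⊗ₘ g)) ≫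
        Functor.OplaxMonoidal.δ F B U)) =
      PT.lift F hF (T'.tr (Functor.LaxMonoidal.μ F A U' ≫ F.map ((𝟙 A ⊗ₘ g) ≫ f) ≫
        Functor.OplaxMonoidal.δ F B U'))
    rw [PT.dinat_eq₁, PT.dinat_eq₂, T'.dinaturality]
  · intro A B X Y U f g v hv
    rw [PT.lift_eq_some] at hv ⊢
    rw [PT.strength_eq]
    have h1 := T'.strength _ (F.map g) _ hv
    have h2 := T'.naturality _ (δ F X A) (μ F Y B) _ h1
    rw [h2]
    congr 1
    exact (Functor.Monoidal.map_tensor F g v).symm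
  · intro A B f
    rw [PT.lift_eq_some, ← PT.van1_eq₁ F f,
      T'.dinaturality ((μ F A (𝟙_ C) ≫ F.map f ≫ δ F B (𝟙_ C)) ≫ (𝟙 (F.obj B) ⊗ₘ η F))
        (ε F),
      T'.vanishing_one, ← PT.van1_eq₂ F f]
  · intro A B U V f w hw
    rw [PT.lift_eq_some] at hw
    have h2 := T'.naturality _ (μ F A U) (δ F B U) _ hw
    rw [← PT.van2_eq₁] at h2
    have h3 := T'.vanishing_two _ _ h2
    have h4 := T'.dinaturality
      ((μ F A (U ⊗ V) ≫ F.map f ≫ δ F B (U ⊗ V)) ≫ (𝟙 (F.obj B) ⊗ₘ δ F U V)) (μ F U V)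
    rw [PT.van2_eq₂] at h4
    show PT.lift F hF (T'.tr _) = PT.lift F hF (T'.tr _)
    rw [h3, h4]
  · intro A
    rw [PT.lift_eq_some, PT.yank_eq, T'.yanking, F.map_id]
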